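/- Every attractor of a system of n weak contractions on [0,1]^d is a Hausdorff-metric limit of attractors of IFSs of n (genuine) contractions on [0,1]^d, i.e., wL_n^d ⊆ cl(L_n^d). -/

import Mathlib

open Metric Set Topology Filter TopologicalSpace

noncomputable section

/-- The unit cube `[0,1]^d` with the Euclidean metric. -/
abbrev unitCube (d : ℕ) : Type :=
  {x : EuclideanSpace ℝ (Fin d) // ∀ i, x i ∈ Set.Icc (0:ℝ) 1}

/-- A contraction: a Lipschitz map with constant `< 1`. -/
def IsContraction {X : Type*} [MetricSpace X] (f : X → X) : Prop :=
  ∃ L : NNReal, L < 1 ∧ LipschitzWith L f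

/-- A weak contraction: `d(f x, f y) < d(x, y)` for `x ≠ y`. -/
def IsWeakContraction {X : Type*} [MetricSpace X] (f : X → X) : Prop :=
  ∀ x y, x ≠ y → dist (f x) (f y) < dist x y

/-- `Ld n d`: attractors of IFSs of `n` contractions on `[0,1]^d`,
as a subset of the hyperspace of nonempty compact sets. -/
def Ld (n d : ℕ) : Set (NonemptyCompacts (unitCube d)) :=
  {A | ∃ f : Fin n → unitCube d → unitCube d,
    (∀ i, IsContraction (f i)) ∧
      (A : Set (unitCube d)) = ⋃ i, f i '' (A : Set (unitCube d))}

/-- `wLd n d`: attractors of systems of `n` weak contractions on `[0,1]^d`. -/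
def wLd (n d : ℕ) : Set (NonemptyCompacts (unitCube d)) :=
  {A | ∃ f : Fin n → unitCube d → unitCube d,
    (∀ i, IsWeakContraction (f i)) ∧
      (A : Set (unitCube d)) = ⋃ i, f i '' (A : Set (unitCube d))}

def IFSd (d : ℕ) : Set (NonemptyCompacts (unitCube d)) := ⋃ n, Ld n d

def wIFSd (d : ℕ) : Set (NonemptyCompacts (unitCube d)) := ⋃ n, wLd n d

/-- The embedding `[0,1] → [0,1]^d`, `a ↦ (a,0,…,0)`. -/
def emb (d : ℕ) (hd : 0 < d) (x : unitCube 1) : unitCube d :=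
  ⟨(WithLp.toLp 2 (fun i => if i = (⟨0, hd⟩ : Fin d) then x.1 0 else 0) : EuclideanSpace ℝ (Fin d)),
    fun i => by
      dsimp only
      split_ifs
      · exact x.2 0
      · exact ⟨le_refl 0, zero_le_one⟩⟩

/-- The projection `[0,1]^d → [0,1]` onto the first coordinate. -/
def projL (d : ℕ) (hd : 0 < d) (x : unitCube d) : unitCube 1 :=
  ⟨(WithLp.toLp 2 (fun _ => x.1 ⟨0, hd⟩) : EuclideanSpace ℝ (Fin 1)), fun _ => x.2 ⟨0, hd⟩⟩

/-! ### Auxiliary lemmas on the unit cube -/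

lemma unitCube_norm_le {d : ℕ} {x : EuclideanSpace ℝ (Fin d)}
    (hx : ∀ i, x i ∈ Set.Icc (0:ℝ) 1) : ‖x‖ ≤ Real.sqrt d := by
  rw [EuclideanSpace.norm_eq]
  apply Real.sqrt_le_sqrt
  calc ∑ i, ‖x i‖ ^ 2 ≤ ∑ _i : Fin d, (1:ℝ) := by
        apply Finset.sum_le_sum
        intro i _
        have h := hx i
        have h1 : ‖x i‖ ≤ 1 := by
          rw [Real.norm_eq_abs, abs_of_nonneg h.1]; exact h.2
        calc ‖x i‖ ^ 2 ≤ 1 ^ 2 := pow_le_pow_left₀ (norm_nonneg _) h1 2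
          _ = 1 := one_pow 2
    _ = d := by simp

instance unitCube.compactSpace (d : ℕ) : CompactSpace (unitCube d) := by
  have hclosed : IsClosed {x : EuclideanSpace ℝ (Fin d) | ∀ i, x i ∈ Set.Icc (0:ℝ) 1} := by
    have he : {x : EuclideanSpace ℝ (Fin d) | ∀ i, x i ∈ Set.Icc (0:ℝ) 1} =
        ⋂ i, (fun x : EuclideanSpace ℝ (Fin d) => x i) ⁻¹' Set.Icc (0:ℝ) 1 := by
      ext x; simp
    rw [he]
    exact isClosed_iInter fun i =>
      IsClosed.preimage (EuclideanSpace.proj (𝕜 := ℝ) i).continuous isClosed_Icc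
  have hsub : {x : EuclideanSpace ℝ (Fin d) | ∀ i, x i ∈ Set.Icc (0:ℝ) 1} ⊆
      closedBall 0 (Real.sqrt d) := by
    intro x hx
    rw [mem_closedBall_zero_iff]
    exact unitCube_norm_le hx
  exact isCompact_iff_compactSpace.1
    ((isCompact_closedBall (0 : EuclideanSpace ℝ (Fin d)) (Real.sqrt d)).of_isClosed_subset
      hclosed hsub)

/-- Scaling toward `0` by factor `t ∈ [0,1]`. -/
def scaleMap (d : ℕ) (t : ℝ) (h0 : 0 ≤ t) (h1 : t ≤ 1) (x : unitCube d) : unitCube d :=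
  ⟨t • x.1, fun i => by
    have h := x.2 i
    have he : (t • x.1) i = t * x.1 i := rfl
    rw [he]
    exact ⟨mul_nonneg h0 h.1, mul_le_one₀ h1 h.1 h.2⟩⟩

lemma scaleMap_lipschitz {d : ℕ} {t : ℝ} (h0 : 0 ≤ t) (h1 : t ≤ 1) :
    LipschitzWith t.toNNReal (scaleMap d t h0 h1) := by
  apply LipschitzWith.of_dist_le_mul
  intro x y
  have he : dist (scaleMap d t h0 h1 x) (scaleMap d t h0 h1 y) = dist (t • x.1) (t • y.1) :=
    Subtype.dist_eq _ _
  rw [he, dist_smul₀, Subtype.dist_eq x y, Real.norm_eq_abs, abs_of_nonneg h0,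
    Real.coe_toNNReal t h0]

lemma scaleMap_dist_le {d : ℕ} {t : ℝ} (h0 : 0 ≤ t) (h1 : t ≤ 1) (x : unitCube d) :
    dist (scaleMap d t h0 h1 x) x ≤ (1 - t) * Real.sqrt d := by
  have he : dist (scaleMap d t h0 h1 x) x = dist (t • x.1) x.1 := Subtype.dist_eq _ _
  rw [he, dist_eq_norm]
  have he2 : t • x.1 - x.1 = (t - 1) • x.1 := by rw [sub_smul, one_smul]
  rw [he2, norm_smul, Real.norm_eq_abs, abs_of_nonpos (by linarith)]
  have hn := unitCube_norm_le x.2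
  have h1t : 0 ≤ 1 - t := by linarith
  calc -(t - 1) * ‖x.1‖ = (1 - t) * ‖x.1‖ := by ring_nf
    _ ≤ (1 - t) * Real.sqrt d := by gcongr

/-! ### Hausdorff distance lemmas in a compact metric space -/

section Aux

variable {X : Type*} [MetricSpace X] [CompactSpace X]

lemma hEdist_ne_top {s t : Set X} (hs : s.Nonempty) (ht : t.Nonempty) :
    EMetric.hausdorffEdist s t ≠ ⊤ :=
  Metric.hausdorffEdist_ne_top_of_nonempty_of_bounded hs ht
    isBounded_of_compactSpace isBounded_of_compactSpace

omit [CompactSpace X] in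
lemma weak_lipschitz {f : X → X} (hf : IsWeakContraction f) : LipschitzWith 1 f := by
  apply LipschitzWith.of_dist_le_mul
  intro x y
  rcases eq_or_ne x y with rfl | h
  · simp
  · simpa using (hf x y h).le

lemma hausdorffDist_iUnion_le {ι : Type*} [Fintype ι] [Nonempty ι] {s t : ι → Set X}
    (hs : ∀ i, (s i).Nonempty) (ht : ∀ i, (t i).Nonempty) {r : ℝ} (hr : 0 ≤ r)
    (h : ∀ i, hausdorffDist (s i) (t i) ≤ r) :
    hausdorffDist (⋃ i, s i) (⋃ i, t i) ≤ r := by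
  have half : ∀ (s t : ι → Set X), (∀ i, (s i).Nonempty) → (∀ i, (t i).Nonempty) →
      (∀ i, hausdorffDist (s i) (t i) ≤ r) →
      ∀ x ∈ ⋃ i, s i, infDist x (⋃ i, t i) ≤ r := by
    intro s t hs ht h x hx
    obtain ⟨i, hi⟩ := mem_iUnion.1 hx
    calc infDist x (⋃ i, t i) ≤ infDist x (t i) :=
          infDist_le_infDist_of_subset (subset_iUnion t i) (ht i)
      _ ≤ hausdorffDist (s i) (t i) :=
          infDist_le_hausdorffDist_of_mem hi (hEdist_ne_top (hs i) (ht i))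
      _ ≤ r := h i
  exact hausdorffDist_le_of_infDist hr (half s t hs ht h)
    (half t s ht hs (fun i => by rw [hausdorffDist_comm]; exact h i))

lemma hausdorffDist_image_le {L : NNReal} {g : X → X} (hg : LipschitzWith L g)
    {K K' : Set X} (hK : IsCompact K) (hKne : K.Nonempty)
    (hK' : IsCompact K') (hK'ne : K'.Nonempty) :
    hausdorffDist (g '' K) (g '' K') ≤ L * hausdorffDist K K' := by
  have key : ∀ (A B : Set X), IsCompact B → B.Nonempty → A.Nonempty →
      ∀ x ∈ g '' A, ∃ y ∈ g '' B, dist x y ≤ L * hausdorffDist A B := by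
    rintro A B hB hBne hAne x ⟨a, ha, rfl⟩
    obtain ⟨b, hb, hab⟩ := hB.exists_infDist_eq_dist hBne a
    refine ⟨g b, mem_image_of_mem _ hb, ?_⟩
    calc dist (g a) (g b) ≤ L * dist a b := hg.dist_le_mul a b
      _ = L * infDist a B := by rw [hab]
      _ ≤ L * hausdorffDist A B := by
          gcongr
          exact infDist_le_hausdorffDist_of_mem ha (hEdist_ne_top hAne hBne)
  refine hausdorffDist_le_of_mem_dist (mul_nonneg L.coe_nonneg hausdorffDist_nonneg)
    (key K K' hK' hK'ne hKne) ?_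
  intro x hx
  obtain ⟨y, hy, hxy⟩ := key K' K hK hKne hK'ne x hx
  exact ⟨y, hy, by rwa [hausdorffDist_comm (s := K') (t := K)] at hxy⟩

lemma weak_strict {f : X → X} (hf : IsWeakContraction f) {K K' : Set X}
    (hK : IsCompact K) (hKne : K.Nonempty) (hK' : IsCompact K') (hK'ne : K'.Nonempty)
    {r : ℝ} (hr : 0 < r) (hd : hausdorffDist K K' ≤ r) :
    hausdorffDist (f '' K) (f '' K') < r := by
  have hfc : Continuous f := (weak_lipschitz hf).continuous
  have half : ∀ (A B : Set X), IsCompact A → A.Nonempty → IsCompact B → B.Nonempty →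
      hausdorffDist A B ≤ r →
      ∃ m, 0 ≤ m ∧ m < r ∧ ∀ x ∈ f '' A, infDist x (f '' B) ≤ m := by
    intro A B hA hAne hB hBne hAB
    obtain ⟨x0, hx0, hmax⟩ := hA.exists_isMaxOn hAne
      ((continuous_infDist_pt (f '' B)).comp hfc).continuousOn
    refine ⟨infDist (f x0) (f '' B), infDist_nonneg, ?_, ?_⟩
    · obtain ⟨y, hy, hxy⟩ := hB.exists_infDist_eq_dist hBne x0
      have hxyr : dist x0 y ≤ r := by
        rw [← hxy]
        exact le_trans (infDist_le_hausdorffDist_of_mem hx0 (hEdist_ne_top hAne hBne)) hAB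
      rcases eq_or_ne x0 y with rfl | hne
      · calc infDist (f x0) (f '' B) ≤ dist (f x0) (f x0) :=
              infDist_le_dist_of_mem (mem_image_of_mem f hy)
          _ = 0 := by simp
          _ < r := hr
      · calc infDist (f x0) (f '' B) ≤ dist (f x0) (f y) :=
              infDist_le_dist_of_mem (mem_image_of_mem f hy)
          _ < dist x0 y := hf x0 y hne
          _ ≤ r := hxyr
    · rintro x ⟨a, ha, rfl⟩
      exact hmax ha
  obtain ⟨m1, hm10, hm1r, hm1⟩ := half K K' hK hKne hK' hK'ne hd
  obtain ⟨m2, hm20, hm2r, hm2⟩ := half K' K hK' hK'ne hK hKne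
    (by rwa [hausdorffDist_comm])
  calc hausdorffDist (f '' K) (f '' K') ≤ max m1 m2 :=
        hausdorffDist_le_of_infDist (le_max_of_le_left hm10)
          (fun x hx => le_max_of_le_left (hm1 x hx))
          (fun x hx => le_max_of_le_right (hm2 x hx))
    _ < r := max_lt hm1r hm2r

/-! ### The Hutchinson operator on the hyperspace -/

omit [CompactSpace X] in
lemma nc_dist_eq (K K' : NonemptyCompacts X) :
    dist K K' = hausdorffDist (K : Set X) (K' : Set X) :=
  NonemptyCompacts.dist_eq

/-- The Hutchinson operator on the hyperspace. -/
def Fmap {n : ℕ} [Nonempty (Fin n)] (g : Fin n → X → X) (hg : ∀ i, Continuous (g i))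
    (K : NonemptyCompacts X) : NonemptyCompacts X :=
  ⟨⟨⋃ i, g i '' (K : Set X), isCompact_iUnion fun i => K.isCompact.image (hg i)⟩,
    ⟨g (Classical.arbitrary (Fin n)) K.nonempty.choose,
      mem_iUnion.2 ⟨Classical.arbitrary (Fin n),
        mem_image_of_mem _ K.nonempty.choose_spec⟩⟩⟩

omit [CompactSpace X] in
@[simp] lemma Fmap_coe {n : ℕ} [Nonempty (Fin n)] (g : Fin n → X → X)
    (hg : ∀ i, Continuous (g i)) (K : NonemptyCompacts X) :
    (Fmap g hg K : Set X) = ⋃ i, g i '' (K : Set X) := rfl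

lemma Fmap_lipschitz {n : ℕ} [Nonempty (Fin n)] {g : Fin n → X → X} {L : NNReal}
    (hg : ∀ i, LipschitzWith L (g i)) :
    LipschitzWith L (Fmap g (fun i => (hg i).continuous)) := by
  apply LipschitzWith.of_dist_le_mul
  intro K K'
  rw [nc_dist_eq, nc_dist_eq, Fmap_coe, Fmap_coe]
  exact hausdorffDist_iUnion_le
    (fun i => K.nonempty.image _) (fun i => K'.nonempty.image _)
    (mul_nonneg L.coe_nonneg hausdorffDist_nonneg)
    (fun i => hausdorffDist_image_le (hg i) K.isCompact K.nonempty K'.isCompact K'.nonempty)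

lemma Fmap_dist_le {n : ℕ} [Nonempty (Fin n)] {g f : Fin n → X → X}
    (hg : ∀ i, Continuous (g i)) (hf : ∀ i, Continuous (f i)) {r : ℝ} (hr : 0 ≤ r)
    (h : ∀ i x, dist (g i x) (f i x) ≤ r) (K : NonemptyCompacts X) :
    dist (Fmap g hg K) (Fmap f hf K) ≤ r := by
  rw [nc_dist_eq, Fmap_coe, Fmap_coe]
  apply hausdorffDist_le_of_mem_dist hr
  · rintro x hx
    obtain ⟨i, y, hy, rfl⟩ := by simpa using hx
    exact ⟨f i y, mem_iUnion.2 ⟨i, mem_image_of_mem _ hy⟩, h i y⟩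
  · rintro x hx
    obtain ⟨i, y, hy, rfl⟩ := by simpa using hx
    exact ⟨g i y, mem_iUnion.2 ⟨i, mem_image_of_mem _ hy⟩, by
      rw [dist_comm]; exact h i y⟩

lemma Fmap_weak {n : ℕ} [Nonempty (Fin n)] {f : Fin n → X → X}
    (hf : ∀ i, IsWeakContraction (f i)) {K K' : NonemptyCompacts X} (hne : K ≠ K') :
    dist (Fmap f (fun i => (weak_lipschitz (hf i)).continuous) K)
      (Fmap f (fun i => (weak_lipschitz (hf i)).continuous) K') < dist K K' := by
  have hr : 0 < dist K K' := dist_pos.2 hne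
  rw [nc_dist_eq, Fmap_coe, Fmap_coe]
  have hstrict : ∀ i, hausdorffDist (f i '' (K : Set X)) (f i '' (K' : Set X)) < dist K K' :=
    fun i => weak_strict (hf i) K.isCompact K.nonempty K'.isCompact K'.nonempty hr
      (le_of_eq (nc_dist_eq K K').symm)
  set M : ℝ := Finset.univ.sup' Finset.univ_nonempty
    (fun i => hausdorffDist (f i '' (K : Set X)) (f i '' (K' : Set X))) with hM
  have hMlt : M < dist K K' := by
    rw [hM]
    exact (Finset.sup'_lt_iff Finset.univ_nonempty).2 fun i _ => hstrict i
  have hM0 : (0:ℝ) ≤ M := le_trans hausdorffDist_nonneg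
    (Finset.le_sup' (fun i => hausdorffDist (f i '' (K : Set X)) (f i '' (K' : Set X)))
      (Finset.mem_univ (Classical.arbitrary (Fin n))))
  calc hausdorffDist (⋃ i, f i '' (K : Set X)) (⋃ i, f i '' (K' : Set X)) ≤ M := by
        apply hausdorffDist_iUnion_le (fun i => K.nonempty.image _)
          (fun i => K'.nonempty.image _) hM0
        intro i
        exact Finset.le_sup'
          (fun j => hausdorffDist (f j '' (K : Set X)) (f j '' (K' : Set X)))
          (Finset.mem_univ i)
    _ < dist K K' := hMlt

end Aux

/-! ### Main theorem -/

theorem stmt12 (n d : ℕ) (hn : 0 < n) (hd : 0 < d) :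
    wLd n d ⊆ closure (Ld n d) := by
  haveI : Nonempty (Fin n) := ⟨⟨0, hn⟩⟩
  rintro A ⟨f, hf, hA⟩
  haveI : Nonempty (NonemptyCompacts (unitCube d)) := ⟨A⟩
  have hfc : ∀ i, Continuous (f i) := fun i => (weak_lipschitz (hf i)).continuous
  set F : NonemptyCompacts (unitCube d) → NonemptyCompacts (unitCube d) := Fmap f hfc with hF
  have hFA : F A = A := by
    apply NonemptyCompacts.ext
    rw [hF, Fmap_coe]
    exact hA.symm
  -- the scaled systems
  set t : ℕ → ℝ := fun k => 1 - 1 / (k + 1) with ht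
  have ht0 : ∀ k, 0 ≤ t k := by
    intro k
    have h1 : (1:ℝ) / (k + 1) ≤ 1 := by
      rw [div_le_one (by positivity)]
      linarith [Nat.cast_nonneg (α := ℝ) k]
    simp only [ht]; linarith
  have ht1 : ∀ k, t k ≤ 1 := by
    intro k
    have : (0:ℝ) < 1 / (k + 1) := by positivity
    simp only [ht]; linarith
  have htlt : ∀ k, t k < 1 := by
    intro k
    have : (0:ℝ) < 1 / (k + 1) := by positivity
    simp only [ht]; linarith
  set g : ℕ → Fin n → unitCube d → unitCube d :=
    fun k i => scaleMap d (t k) (ht0 k) (ht1 k) ∘ f i with hg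
  have hglip : ∀ k i, LipschitzWith (t k).toNNReal (g k i) := by
    intro k i
    have := (scaleMap_lipschitz (d := d) (ht0 k) (ht1 k)).comp (weak_lipschitz (hf i))
    simpa using this
  set G : ℕ → NonemptyCompacts (unitCube d) → NonemptyCompacts (unitCube d) :=
    fun k => Fmap (g k) (fun i => ((hglip k i)).continuous) with hG
  have hGcontr : ∀ k, ContractingWith (t k).toNNReal (G k) := by
    intro k
    constructor
    · rw [← Real.toNNReal_one]
      exact (Real.toNNReal_lt_toNNReal_iff one_pos).2 (htlt k)
    · exact Fmap_lipschitz (hglip k)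
  set Ak : ℕ → NonemptyCompacts (unitCube d) := fun k => (hGcontr k).fixedPoint (G k) with hAk
  have hAkfix : ∀ k, G k (Ak k) = Ak k := fun k =>
    ContractingWith.fixedPoint_isFixedPt (hGcontr k)
  have hAkmem : ∀ k, Ak k ∈ Ld n d := by
    intro k
    refine ⟨g k, fun i => ⟨(t k).toNNReal, (hGcontr k).1, hglip k i⟩, ?_⟩
    conv_lhs => rw [← hAkfix k]
    rfl
  -- distance between `G k` and `F`
  have hGF : ∀ k K, dist (G k K) (F K) ≤ (1 / (k + 1 : ℝ)) * Real.sqrt d := by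
    intro k K
    apply Fmap_dist_le _ _ (by positivity)
    intro i x
    have h1 : dist (g k i x) (f i x) ≤ (1 - t k) * Real.sqrt d :=
      scaleMap_dist_le (ht0 k) (ht1 k) (f i x)
    have h2 : 1 - t k = 1 / (k + 1 : ℝ) := by simp [ht]
    rwa [h2] at h1
  -- `F` is nonexpansive
  have hF1 : ∀ K K', dist (F K) (F K') ≤ dist K K' := by
    intro K K'
    have h1 := (Fmap_lipschitz (fun i => weak_lipschitz (hf i))).dist_le_mul K K'
    have h2 : dist (F K) (F K') ≤ ((1:NNReal) : ℝ) * dist K K' := h1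
    simpa using h2
  -- suppose `A` is not in the closure
  rw [Metric.mem_closure_iff]
  by_contra hc
  push_neg at hc
  obtain ⟨ε, hε, hfar⟩ := hc
  obtain ⟨B, -, φ, hφ, hBlim⟩ := isCompact_univ.tendsto_subseq
    (fun k => mem_univ (Ak k))
  -- `F B = B`
  have hT1 : Tendsto (fun k => dist B (Ak (φ k))) atTop (𝓝 0) := by
    have := (tendsto_const_nhds (x := B) (f := atTop)).dist hBlim
    simpa using this
  have hT2 : Tendsto (fun k => (1 / (φ k + 1 : ℝ)) * Real.sqrt d) atTop (𝓝 0) := by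
    have h0 : Tendsto (fun k : ℕ => (1 / (k + 1 : ℝ))) atTop (𝓝 0) :=
      tendsto_one_div_add_atTop_nhds_zero_nat
    have h1 := (h0.comp (hφ.tendsto_atTop)).mul_const (Real.sqrt d)
    simpa using h1
  have hFB : F B = B := by
    have hle : ∀ k, dist (F B) B ≤
        dist B (Ak (φ k)) + (1 / (φ k + 1 : ℝ)) * Real.sqrt d + dist B (Ak (φ k)) := by
      intro k
      calc dist (F B) B ≤ dist (F B) (F (Ak (φ k))) + dist (F (Ak (φ k))) (G (φ k) (Ak (φ k)))
            + dist (G (φ k) (Ak (φ k))) B := dist_triangle4 _ _ _ _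
        _ ≤ dist B (Ak (φ k)) + (1 / (φ k + 1 : ℝ)) * Real.sqrt d + dist B (Ak (φ k)) := by
            gcongr
            · exact hF1 B (Ak (φ k))
            · rw [dist_comm]; exact hGF (φ k) (Ak (φ k))
            · rw [hAkfix (φ k), dist_comm]
    have hrhs : Tendsto (fun k => dist B (Ak (φ k)) + (1 / (φ k + 1 : ℝ)) * Real.sqrt d
        + dist B (Ak (φ k))) atTop (𝓝 0) := by
      have := (hT1.add hT2).add hT1
      simpa using this
    have h0 : dist (F B) B ≤ 0 := ge_of_tendsto hrhs (Eventually.of_forall hle)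
    exact dist_eq_zero.1 (le_antisymm h0 dist_nonneg)
  -- uniqueness of the fixed point of `F`
  have hBA : B = A := by
    by_contra hne
    have h1 := Fmap_weak hf hne (K := B) (K' := A)
    have h2 : dist (F B) (F A) < dist B A := h1
    rw [hFB, hFA] at h2
    exact lt_irrefl _ h2
  -- contradiction with `hfar`
  have hεle : ∀ k, ε ≤ dist A (Ak (φ k)) := fun k => hfar _ (hAkmem (φ k))
  have hT3 : Tendsto (fun k => dist A (Ak (φ k))) atTop (𝓝 0) := by
    have := (tendsto_const_nhds (x := A) (f := atTop)).dist hBlim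
    rw [hBA] at this
    simpa using this
  have : ε ≤ 0 := ge_of_tendsto hT3 (Eventually.of_forall hεle)
  linarith
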